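/- Let A be Hermitian and B Hermitian positive definite, both n×n complex matrices, and let μ = max{|λ| : λ eigenvalue of the pencil (A,B), i.e., det(A - λB) = 0}. Then ‖A‖_2 ≤ μ‖B‖_2. -/

import Mathlib

open Matrix
open scoped ComplexOrder

/-- The spectral norm of a complex matrix (operator norm on Euclidean space). -/
noncomputable def specNorm {n : ℕ} (B : Matrix (Fin n) (Fin n) ℂ) : ℝ :=
  ‖Matrix.toEuclideanCLM (𝕜 := ℂ) B‖

set_option maxHeartbeats 1000000 in
theorem stmt_7 (n : ℕ) (A B : Matrix (Fin n) (Fin n) ℂ)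
    (hA : A.IsHermitian) (hB : B.PosDef) (μ : ℝ)
    (hμ : ∀ lam : ℂ, (A - lam • B).det = 0 → ‖lam‖ ≤ μ) :
    specNorm A ≤ μ * specNorm B := by
  rcases Nat.eq_zero_or_pos n with hn | hn
  · subst hn
    have hA0 : A = 0 := Subsingleton.elim _ _
    have hB0 : B = 0 := Subsingleton.elim _ _
    have h1 : specNorm A = 0 := by
      show ‖Matrix.toEuclideanCLM (𝕜 := ℂ) A‖ = 0
      rw [hA0, map_zero, norm_zero]
    have h2 : specNorm B = 0 := by
      show ‖Matrix.toEuclideanCLM (𝕜 := ℂ) B‖ = 0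
      rw [hB0, map_zero, norm_zero]
    rw [h1, h2, mul_zero]
  haveI : NeZero n := ⟨hn.ne'⟩
  -- square root of B
  set S := (open scoped MatrixOrder in CFC.sqrt B) with hSdef
  have hSH : S.IsHermitian := (open scoped MatrixOrder in (CFC.sqrt_nonneg B).posSemidef.1)
  have hSS : S * S = B := (open scoped MatrixOrder in CFC.sqrt_mul_sqrt_self B hB.posSemidef.nonneg)
  have hdetS : IsUnit S.det := by
    have hdetB : IsUnit B.det := (Matrix.isUnit_iff_isUnit_det _).mp hB.isUnit
    rw [← hSS, det_mul] at hdetB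
    exact isUnit_of_mul_isUnit_left hdetB
  have hSinv : S⁻¹ * S = 1 := nonsing_inv_mul S hdetS
  have hSinv' : S * S⁻¹ = 1 := mul_nonsing_inv S hdetS
  set C := S⁻¹ * A * S⁻¹ with hCdef
  have hCH : C.IsHermitian := by
    have hSiH : (S⁻¹).IsHermitian := hSH.inv
    rw [hCdef]
    unfold Matrix.IsHermitian
    rw [conjTranspose_mul, conjTranspose_mul, hSiH, hA]
    rw [Matrix.mul_assoc]
  have hSCS : S * C * S = A := by
    simp only [hCdef, Matrix.mul_assoc]
    rw [hSinv, Matrix.mul_one, ← Matrix.mul_assoc, hSinv', Matrix.one_mul]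
  -- spectrum bound
  have hspec : ∀ lam ∈ spectrum ℂ C, ‖lam‖ ≤ μ := by
    intro lam hlam
    apply hμ
    rw [spectrum.mem_iff] at hlam
    have hdet : (lam • (1 : Matrix (Fin n) (Fin n) ℂ) - C).det = 0 := by
      by_contra h
      rw [← Algebra.algebraMap_eq_smul_one] at h
      exact hlam ((Matrix.isUnit_iff_isUnit_det _).mpr (Ne.isUnit h))
    have key : A - lam • B = S * (C - lam • 1) * S := by
      rw [Matrix.mul_sub, Matrix.sub_mul, hSCS]
      congr 1
      rw [mul_smul_comm, smul_mul_assoc, Matrix.mul_one, hSS]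
    rw [key, det_mul, det_mul]
    have : (C - lam • (1 : Matrix (Fin n) (Fin n) ℂ)).det = 0 := by
      have := det_smul (lam • (1 : Matrix (Fin n) (Fin n) ℂ) - C) (-1)
      rw [neg_one_smul, neg_sub] at this
      rw [this, hdet, mul_zero]
    rw [this, mul_zero, zero_mul]
  -- μ ≥ 0
  have hspec_ne : (spectrum ℂ C).Nonempty := spectrum.nonempty_of_isAlgClosed_of_finiteDimensional ℂ C
  obtain ⟨lam₀, hlam₀⟩ := hspec_ne
  have hμ0 : 0 ≤ μ := le_trans (norm_nonneg _) (hspec lam₀ hlam₀)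
  -- pass to CLM
  set f := Matrix.toEuclideanCLM (n := Fin n) (𝕜 := ℂ)
  have hfspec : spectrum ℂ (f C) = spectrum ℂ C := AlgEquiv.spectrum_eq f C
  have hfCsa : IsSelfAdjoint (f C) := by
    have h : star C = C := hCH
    rw [_root_.IsSelfAdjoint, ← map_star f, h]
  have hnormC : ‖f C‖ ≤ μ := by
    have hr : spectralRadius ℂ (f C) = ‖f C‖₊ := hfCsa.spectralRadius_eq_nnnorm
    have hle : spectralRadius ℂ (f C) ≤ ENNReal.ofReal μ := by
      rw [spectralRadius]
      refine iSup₂_le fun k hk => ?_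
      rw [hfspec] at hk
      have := hspec k hk
      rw [← enorm_eq_nnnorm, ← ofReal_norm]
      exact ENNReal.ofReal_le_ofReal this
    rw [hr] at hle
    have := ENNReal.toReal_mono (by simp) hle
    simpa [ENNReal.toReal_ofReal hμ0] using this
  have hfSsa : IsSelfAdjoint (f S) := by
    have h : star S = S := hSH
    rw [_root_.IsSelfAdjoint, ← map_star f, h]
  have hnormS : ‖f S‖ * ‖f S‖ = ‖f B‖ := by
    have h1 : f B = star (f S) * f S := by
      rw [hfSsa.star_eq, ← _root_.map_mul f, hSS]
    rw [h1]
    exact CStarRing.norm_star_mul_self.symm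
  calc specNorm A = ‖f (S * C * S)‖ := by rw [hSCS]; rfl
    _ = ‖f S * f C * f S‖ := by rw [_root_.map_mul f, _root_.map_mul f]
    _ ≤ ‖f S‖ * ‖f C‖ * ‖f S‖ :=
        le_trans (norm_mul_le _ _) (by gcongr; exact norm_mul_le _ _)
    _ = ‖f C‖ * (‖f S‖ * ‖f S‖) := by ring
    _ ≤ μ * ‖f B‖ := by rw [hnormS]; gcongr
    _ = μ * specNorm B := rfl
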